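/- arXiv:2304.14980 — 2 statements merged into one kernel-verified Lean document; each statement's English description precedes it below -/
import Mathlib

section
/- Let s ∈ [1/2, 3/4], let ε be a real number, and set q = 3/2 − s + ε. Let x be a non-dirty candidate with respect to threshold s in an election with n ≥ 3 candidates, and suppose n ≤ (√((1−s)(7−9s)) + 4 − 5s)/(3 − 4s) and ε > (s−1)/(n−1). Then for every candidate y ≠ x: if x ≥_q y then x is ranked before y in every Kemeny ranking of the election, and if y ≥_q x then y is ranked before x in every Kemeny ranking of the election. -/
open Finset

/-- A ranking (strict total order) of the finite candidate set `C`, encoded as a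
bijection with `Fin (Fintype.card C)`; position `0` is the top of the ranking. -/
abbrev Ranking (C : Type*) [Fintype C] := C ≃ Fin (Fintype.card C)

section Defs

variable {C : Type*} [Fintype C] [DecidableEq C]

/-- `x` is ranked (strictly) before `y` in the ranking `π`. -/
def Before (π : Ranking C) (x y : C) : Prop := π x < π y

instance (π : Ranking C) (x y : C) : Decidable (Before π x y) :=
  inferInstanceAs (Decidable (π x < π y))

instance : DecidableEq (Ranking C) := fun a b =>
  decidable_of_iff (∀ i, a i = b i) Equiv.ext_iff.symm

/-- The top-ranked element of `S ⊆ C` according to `π` (`⊤` if `S = ∅`). -/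
def topS (π : Ranking C) (S : Finset C) : WithTop C :=
  (S.image π).min.map (fun i => π.symm i)

/-- The `k`-wise Kendall-tau distance between two rankings: the number of subsets
`S ⊆ C` with `|S| ≤ k` on whose top element the two rankings disagree (subsets of
size at most one never contribute). -/
def kDist (k : ℕ) (π σ : Ranking C) : ℕ :=
  ((Finset.univ : Finset C).powerset.filter
    (fun S => S.card ≤ k ∧ topS π S ≠ topS σ S)).card

/-- The `k`-wise Kendall-tau distance from a ranking to a voting profile. -/
def kDistV (k : ℕ) (π : Ranking C) (V : Multiset (Ranking C)) : ℕ :=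
  (V.map (fun σ => kDist k π σ)).sum

/-- `π` is a `k`-wise median (for `k = 2`: a Kemeny ranking) of the profile `V`. -/
def IsKMedian (k : ℕ) (V : Multiset (Ranking C)) (π : Ranking C) : Prop :=
  ∀ σ : Ranking C, kDistV k π V ≤ kDistV k σ V

/-- The number of votes of `V` in which `x` is ranked before `y`. -/
def votesBefore (V : Multiset (Ranking C)) (x y : C) : ℕ :=
  Multiset.card (V.filter (fun v => Before v x y))

/-- `x ≥ₛ y` : `x` is ranked before `y` in at least `s·|V|` of the votes. -/
def AtLeastRatio (V : Multiset (Ranking C)) (s : ℝ) (x y : C) : Prop :=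
  s * (Multiset.card V : ℝ) ≤ (votesBefore V x y : ℝ)

/-- `x >ₛ y` : `x` is ranked before `y` in more than `s·|V|` of the votes. -/
def MoreThanRatio (V : Multiset (Ranking C)) (s : ℝ) (x y : C) : Prop :=
  s * (Multiset.card V : ℝ) < (votesBefore V x y : ℝ)

noncomputable instance (V : Multiset (Ranking C)) (s : ℝ) (x y : C) :
    Decidable (AtLeastRatio V s x y) :=
  inferInstanceAs (Decidable (s * (Multiset.card V : ℝ) ≤ (votesBefore V x y : ℝ)))

/-- `x` is a non-dirty candidate w.r.t. threshold `s`. -/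
def NonDirty (V : Multiset (Ranking C)) (s : ℝ) (x : C) : Prop :=
  ∀ y : C, y ≠ x → AtLeastRatio V s x y ∨ AtLeastRatio V s y x

/-- `x` is ranked first (is the winner) in the ranking `π`. -/
def RankedFirst (π : Ranking C) (x : C) : Prop :=
  ∀ y : C, y ≠ x → Before π x y

instance (π : Ranking C) (x : C) : Decidable (RankedFirst π x) :=
  inferInstanceAs (Decidable (∀ y : C, y ≠ x → Before π x y))

end Defs

set_option linter.unusedSectionVars false
set_option linter.unusedVariables false

section Aux
variable {C : Type*} [Fintype C] [DecidableEq C]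

lemma before_total {π : Ranking C} {a b : C} (h : a ≠ b) : Before π a b ∨ Before π b a := by
  rcases lt_trichotomy (π a) (π b) with h' | h' | h'
  · exact Or.inl h'
  · exact absurd (π.injective h') h
  · exact Or.inr h'

lemma before_asymm {π : Ranking C} {a b : C} (h : Before π a b) : ¬ Before π b a :=
  lt_asymm h

lemma before_ne {π : Ranking C} {a b : C} (h : Before π a b) : a ≠ b := by
  rintro rfl; exact lt_irrefl _ h

lemma votesBefore_add {V : Multiset (Ranking C)} {a b : C} (h : a ≠ b) :
    votesBefore V a b + votesBefore V b a = Multiset.card V := by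
  unfold votesBefore
  rw [← Multiset.card_add]
  have : (V.filter fun v => Before v b a) = V.filter (fun v => ¬ Before v a b) :=
    Multiset.filter_congr (fun v _ => by
      constructor
      · exact fun hb => before_asymm hb
      · intro hn
        rcases before_total (π := v) h with h' | h'
        · exact absurd h' hn
        · exact h')
  rw [this, Multiset.filter_add_not]

lemma votesBefore_triangle (V : Multiset (Ranking C)) (a b c : C) :
    votesBefore V a c ≤ votesBefore V a b + votesBefore V b c := by
  unfold votesBefore
  have h1 : Multiset.card (V.filter fun v => Before v a c)
      ≤ Multiset.card (V.filter fun v => Before v a b ∨ Before v b c) :=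
    Multiset.card_le_card (Multiset.monotone_filter_right _ (fun v hv => by
      by_cases hb : Before v a b
      · exact Or.inl hb
      · exact Or.inr (lt_of_le_of_lt (not_lt.mp hb) hv)))
  have h2 := Multiset.filter_add_filter (fun v : Ranking C => Before v a b)
      (fun v => Before v b c) V
  have h3 := congrArg Multiset.card h2
  simp only [Multiset.card_add] at h3
  omega

end Aux
section Aux2
variable {C : Type*} [Fintype C] [DecidableEq C]

lemma topS_singleton (π : Ranking C) (a : C) : topS π {a} = (a : WithTop C) := by
  simp [topS]

lemma topS_empty (π : Ranking C) : topS π (∅ : Finset C) = ⊤ := by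
  simp [topS]

lemma topS_pair {π : Ranking C} {a b : C} (hab : π a < π b) :
    topS π {a, b} = (a : WithTop C) := by
  unfold topS
  rw [Finset.image_insert, Finset.image_singleton]
  unfold Finset.min
  rw [Finset.inf_insert, Finset.inf_singleton, ← WithTop.coe_min, min_eq_left hab.le]
  simp

lemma topS_pair_ne {π σ : Ranking C} {a b : C} (h1 : π a < π b) (h2 : σ b < σ a) :
    topS π {a, b} ≠ topS σ {a, b} := by
  rw [topS_pair h1, show ({a, b} : Finset C) = {b, a} from Finset.pair_comm a b, topS_pair h2]
  have hab : a ≠ b := fun h => absurd (h ▸ h1) (lt_irrefl _)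
  simp [hab]

lemma topS_pair_eq {π σ : Ranking C} {a b : C} (h1 : π a < π b) (h2 : σ a < σ b) :
    topS π {a, b} = topS σ {a, b} := by
  rw [topS_pair h1, topS_pair h2]

/-- Oriented disagreement pairs. -/
def disagSet (π σ : Ranking C) : Finset (C × C) :=
  (univ : Finset C).offDiag.filter (fun p => Before π p.1 p.2 ∧ Before σ p.2 p.1)

lemma kDist_two (π σ : Ranking C) : kDist 2 π σ = (disagSet π σ).card := by
  unfold kDist
  have hset : (Finset.univ : Finset C).powerset.filter
      (fun S => S.card ≤ 2 ∧ topS π S ≠ topS σ S)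
      = (disagSet π σ).image (fun p => ({p.1, p.2} : Finset C)) := by
    ext S
    simp only [Finset.mem_filter, Finset.mem_powerset, Finset.mem_image]
    constructor
    · rintro ⟨-, hcard, hne⟩
      have h2 : S.card = 2 := by
        rcases Nat.lt_or_ge S.card 2 with h | h
        · exfalso
          exact hne (by
            have h1 : S.card = 0 ∨ S.card = 1 := by omega
            rcases h1 with h1 | h1
            · rw [Finset.card_eq_zero.mp h1, topS_empty, topS_empty]
            · rcases Finset.card_eq_one.mp h1 with ⟨x, rfl⟩
              rw [topS_singleton, topS_singleton])
        · omega
      rcases Finset.card_eq_two.mp h2 with ⟨a, b, hab, rfl⟩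
      rcases before_total (π := π) hab with h' | h'
      · have hs : Before σ b a := by
          rcases before_total (π := σ) hab with h'' | h''
          · exact absurd (topS_pair_eq h' h'') hne
          · exact h''
        exact ⟨(a, b), by simp [disagSet, Finset.mem_offDiag, hab, h', hs], rfl⟩
      · have hs : Before σ a b := by
          rcases before_total (π := σ) hab with h'' | h''
          · exact h''
          · exact absurd (topS_pair_eq (σ := σ) h' h'') (by
              rw [Finset.pair_comm] at hne; exact hne)
        exact ⟨(b, a), by simp [disagSet, Finset.mem_offDiag, hab.symm, h', hs],
          by rw [Finset.pair_comm]⟩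
    · rintro ⟨⟨a, b⟩, hp, rfl⟩
      simp only [disagSet, Finset.mem_filter, Finset.mem_offDiag] at hp
      obtain ⟨⟨-, -, hab⟩, h1, h2⟩ := hp
      refine ⟨Finset.subset_univ _, ?_, topS_pair_ne h1 h2⟩
      rw [Finset.card_insert_of_notMem (by simpa using hab), Finset.card_singleton]
  rw [hset, Finset.card_image_of_injOn]
  rintro ⟨a, b⟩ ha ⟨c, d⟩ hc h
  have hset2 : ({a, b} : Finset C) = {c, d} := h
  simp only [disagSet, Finset.mem_coe, Finset.mem_filter, Finset.mem_offDiag] at ha hc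
  obtain ⟨⟨-, -, hab⟩, ha1, -⟩ := ha
  obtain ⟨⟨-, -, hcd⟩, hc1, -⟩ := hc
  have h1 : a = c ∧ b = d ∨ a = d ∧ b = c := by
    have hac : a ∈ ({c, d} : Finset C) := by rw [← hset2]; simp
    have hbc : b ∈ ({c, d} : Finset C) := by rw [← hset2]; simp
    simp only [Finset.mem_insert, Finset.mem_singleton] at hac hbc
    rcases hac with rfl | rfl
    · rcases hbc with rfl | rfl
      · exact absurd rfl hab
      · exact Or.inl ⟨rfl, rfl⟩
    · rcases hbc with rfl | rfl
      · exact Or.inr ⟨rfl, rfl⟩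
      · exact absurd rfl hab
  rcases h1 with ⟨rfl, rfl⟩ | ⟨rfl, rfl⟩
  · rfl
  · exact absurd hc1 (before_asymm ha1)

end Aux2
section Aux3
variable {C : Type*} [Fintype C] [DecidableEq C]

lemma kDistV_two (π : Ranking C) (V : Multiset (Ranking C)) :
    kDistV 2 π V = ∑ p ∈ ((univ : Finset C).offDiag.filter fun p => Before π p.1 p.2),
      votesBefore V p.2 p.1 := by
  unfold kDistV
  have h1 : ∀ σ : Ranking C, kDist 2 π σ
      = ∑ p ∈ ((univ : Finset C).offDiag.filter fun p => Before π p.1 p.2),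
          (if Before σ p.2 p.1 then 1 else 0) := by
    intro σ
    rw [kDist_two]
    unfold disagSet
    rw [← Finset.filter_filter, Finset.card_filter]
  simp only [h1]
  induction V using Multiset.induction_on with
  | empty => simp [votesBefore]
  | cons a V ih =>
      rw [Multiset.map_cons, Multiset.sum_cons, ih, ← Finset.sum_add_distrib]
      refine Finset.sum_congr rfl (fun p _ => ?_)
      unfold votesBefore
      rw [Multiset.filter_cons, Multiset.card_add]
      split_ifs <;> simp

lemma median_flip {V : Multiset (Ranking C)} {π : Ranking C}
    (hm : IsKMedian 2 V π) (σ : Ranking C) :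
    ∑ p ∈ disagSet π σ, votesBefore V p.2 p.1 ≤ ∑ p ∈ disagSet π σ, votesBefore V p.1 p.2 := by
  classical
  have h := hm σ
  rw [kDistV_two, kDistV_two] at h
  set f : C × C → ℕ := fun p => votesBefore V p.2 p.1 with hf
  set O := (univ : Finset C).offDiag with hO
  have hnot : ∀ τ υ : Ranking C,
      O.filter (fun p => Before τ p.1 p.2 ∧ ¬ Before υ p.1 p.2) = disagSet τ υ := by
    intro τ υ
    unfold disagSet
    rw [← hO]
    refine Finset.filter_congr (fun p hp => ?_)
    simp only [hO, Finset.mem_offDiag] at hp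
    obtain ⟨-, -, hne⟩ := hp
    constructor
    · rintro ⟨h1, h2⟩
      refine ⟨h1, ?_⟩
      rcases before_total (π := υ) hne with h' | h'
      · exact absurd h' h2
      · exact h'
    · rintro ⟨h1, h2⟩
      exact ⟨h1, before_asymm h2⟩
  have hsplit : ∀ τ υ : Ranking C,
      ∑ p ∈ O.filter (fun p => Before τ p.1 p.2), f p
      = ∑ p ∈ O.filter (fun p => Before τ p.1 p.2 ∧ Before υ p.1 p.2), f p
        + ∑ p ∈ disagSet τ υ, f p := by
    intro τ υ
    rw [← Finset.sum_filter_add_sum_filter_not (O.filter (fun p => Before τ p.1 p.2))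
      (fun p => Before υ p.1 p.2) f, Finset.filter_filter, Finset.filter_filter, hnot]
  have h1 := hsplit π σ
  have h2 := hsplit σ π
  have hcomm : O.filter (fun p => Before σ p.1 p.2 ∧ Before π p.1 p.2)
      = O.filter (fun p => Before π p.1 p.2 ∧ Before σ p.1 p.2) :=
    Finset.filter_congr (fun p _ => and_comm)
  rw [hcomm] at h2
  rw [h1, h2] at h
  have hswap : disagSet σ π = (disagSet π σ).image Prod.swap := by
    ext ⟨a, b⟩
    simp only [disagSet, Finset.mem_image, Finset.mem_filter, Finset.mem_offDiag, Prod.exists]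
    constructor
    · rintro ⟨⟨-, -, hne⟩, h1, h2⟩
      exact ⟨b, a, ⟨⟨Finset.mem_univ _, Finset.mem_univ _, fun hh => hne hh.symm⟩, h2, h1⟩, rfl⟩
    · rintro ⟨u, v, ⟨⟨-, -, hne⟩, hh1, hh2⟩, heq⟩
      rw [Prod.ext_iff] at heq
      obtain ⟨h3, h4⟩ := heq
      simp only [Prod.swap_prod_mk] at h3 h4 ⊢
      subst h3; subst h4
      exact ⟨⟨Finset.mem_univ _, Finset.mem_univ _, fun hh => hne hh.symm⟩, hh2, hh1⟩
  rw [hswap, Finset.sum_image (by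
    rintro ⟨a, b⟩ _ ⟨c, d⟩ _ hcd
    rw [Prod.ext_iff] at hcd ⊢
    exact ⟨hcd.2, hcd.1⟩)] at h
  simpa [hf] using h

end Aux3
section Aux4
variable {C : Type*} [Fintype C] [DecidableEq C]

lemma exists_key_ranking (key : C → ℚ) (hinj : Function.Injective key) :
    ∃ σ : Ranking C, ∀ a b : C, Before σ a b ↔ key a < key b := by
  classical
  set T : Finset ℚ := (univ : Finset C).image key with hT
  have hcard : T.card = Fintype.card C := by
    rw [hT, Finset.card_image_of_injective _ hinj, Finset.card_univ]
  let e := T.orderIsoOfFin hcard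
  have hmem : ∀ c : C, key c ∈ T := fun c => Finset.mem_image_of_mem key (Finset.mem_univ c)
  let g : C → Fin (Fintype.card C) := fun c => e.symm ⟨key c, hmem c⟩
  have hginj : Function.Injective g := by
    intro a b hab
    have := e.symm.injective hab
    exact hinj (by simpa using congrArg Subtype.val this)
  have hgbij : Function.Bijective g :=
    (Fintype.bijective_iff_injective_and_card g).mpr ⟨hginj, by simp⟩
  refine ⟨Equiv.ofBijective g hgbij, fun a b => ?_⟩
  show g a < g b ↔ key a < key b
  rw [OrderIso.lt_iff_lt e.symm]
  exact Iff.rfl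

lemma move_right {V : Multiset (Ranking C)} {π : Ranking C} (hm : IsKMedian 2 V π)
    {u w : C} (huw : π u < π w) :
    ∑ z ∈ (univ : Finset C).filter (fun z => π u < π z ∧ π z ≤ π w), votesBefore V z u
    ≤ ∑ z ∈ (univ : Finset C).filter (fun z => π u < π z ∧ π z ≤ π w), votesBefore V u z := by
  classical
  set key : C → ℚ := fun c => if c = u then ((π w : ℕ) : ℚ) + 1/2 else ((π c : ℕ) : ℚ)
    with hkeydef
  have hku : key u = ((π w : ℕ) : ℚ) + 1/2 := if_pos rfl
  have hko : ∀ c : C, c ≠ u → key c = ((π c : ℕ) : ℚ) := fun c hc => if_neg hc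
  have hinj : Function.Injective key := by
    intro a b hab
    by_cases ha : a = u <;> by_cases hb : b = u
    · rw [ha, hb]
    · exfalso
      rw [ha, hku, hko b hb] at hab
      have h2 : ((2 * (π b : ℕ) : ℕ) : ℚ) = ((2 * (π w : ℕ) + 1 : ℕ) : ℚ) := by
        push_cast; linarith
      have h3 : 2 * (π b : ℕ) = 2 * (π w : ℕ) + 1 := by exact_mod_cast h2
      omega
    · exfalso
      rw [hb, hku, hko a ha] at hab
      have h2 : ((2 * (π a : ℕ) : ℕ) : ℚ) = ((2 * (π w : ℕ) + 1 : ℕ) : ℚ) := by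
        push_cast; linarith
      have h3 : 2 * (π a : ℕ) = 2 * (π w : ℕ) + 1 := by exact_mod_cast h2
      omega
    · rw [hko a ha, hko b hb] at hab
      have : (π a : ℕ) = (π b : ℕ) := by exact_mod_cast hab
      exact π.injective (Fin.ext this)
  obtain ⟨σ, hσ⟩ := exists_key_ranking key hinj
  have hD : disagSet π σ
      = ((univ : Finset C).filter (fun z => π u < π z ∧ π z ≤ π w)).image (fun z => (u, z)) := by
    ext ⟨a, b⟩
    simp only [disagSet, Finset.mem_image, Finset.mem_filter, Finset.mem_offDiag,
      Finset.mem_univ, true_and, Prod.mk.injEq]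
    constructor
    · rintro ⟨hne, h1, h2⟩
      have h2' : key b < key a := (hσ b a).mp h2
      by_cases ha : a = u
      · rw [ha] at hne h1 h2' ⊢
        have hbu : b ≠ u := fun hh => hne hh.symm
        rw [hku, hko b hbu] at h2'
        have hble : π b ≤ π w := by
          by_contra hgt
          push_neg at hgt
          have hc : ((π w : ℕ) + 1 : ℚ) ≤ ((π b : ℕ) : ℚ) := by exact_mod_cast hgt
          linarith
        exact ⟨b, ⟨h1, hble⟩, rfl, rfl⟩
      · exfalso
        by_cases hb : b = u
        · rw [hb] at h1 h2'
          rw [hku, hko a ha] at h2'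
          have hwa : π w < π a := by
            have : ((π w : ℕ) : ℚ) < ((π a : ℕ) : ℚ) := by linarith
            exact_mod_cast this
          exact absurd (lt_trans h1 huw) (lt_asymm hwa)
        · rw [hko a ha, hko b hb] at h2'
          have : (π b : ℕ) < (π a : ℕ) := by exact_mod_cast h2'
          exact absurd h1 (lt_asymm this)
    · rintro ⟨z, ⟨hz1, hz2⟩, rfl, rfl⟩
      have hzu : z ≠ u := fun hh => by subst hh; exact lt_irrefl _ hz1
      refine ⟨fun hh => hzu hh.symm, hz1, (hσ z u).mpr ?_⟩
      rw [hku, hko z hzu]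
      have h' : ((π z : ℕ) : ℚ) ≤ ((π w : ℕ) : ℚ) := by exact_mod_cast hz2
      linarith
  have h := median_flip hm σ
  rw [hD, Finset.sum_image (by intro x _ y _ hxy; simpa using hxy),
    Finset.sum_image (by intro x _ y _ hxy; simpa using hxy)] at h
  simpa using h

lemma move_left {V : Multiset (Ranking C)} {π : Ranking C} (hm : IsKMedian 2 V π)
    {u w : C} (huw : π u < π w) :
    ∑ z ∈ (univ : Finset C).filter (fun z => π u ≤ π z ∧ π z < π w), votesBefore V w z
    ≤ ∑ z ∈ (univ : Finset C).filter (fun z => π u ≤ π z ∧ π z < π w), votesBefore V z w := by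
  classical
  set key : C → ℚ := fun c => if c = w then ((π u : ℕ) : ℚ) - 1/2 else ((π c : ℕ) : ℚ)
    with hkeydef
  have hkw : key w = ((π u : ℕ) : ℚ) - 1/2 := if_pos rfl
  have hko : ∀ c : C, c ≠ w → key c = ((π c : ℕ) : ℚ) := fun c hc => if_neg hc
  have hhalf : ∀ a : C, a ≠ w → key a = key w → False := by
    intro a ha hab
    rw [hkw, hko a ha] at hab
    have h2 : ((2 * (π a : ℕ) + 1 : ℕ) : ℚ) = ((2 * (π u : ℕ) : ℕ) : ℚ) := by
      push_cast; linarith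
    have h3 : 2 * (π a : ℕ) + 1 = 2 * (π u : ℕ) := by exact_mod_cast h2
    omega
  have hinj : Function.Injective key := by
    intro a b hab
    by_cases ha : a = w <;> by_cases hb : b = w
    · rw [ha, hb]
    · exfalso
      exact hhalf b hb (by rw [← hab, ha])
    · exfalso
      exact hhalf a ha (by rw [hab, hb])
    · rw [hko a ha, hko b hb] at hab
      have : (π a : ℕ) = (π b : ℕ) := by exact_mod_cast hab
      exact π.injective (Fin.ext this)
  obtain ⟨σ, hσ⟩ := exists_key_ranking key hinj
  have hD : disagSet π σ
      = ((univ : Finset C).filter (fun z => π u ≤ π z ∧ π z < π w)).image (fun z => (z, w)) := by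
    ext ⟨a, b⟩
    simp only [disagSet, Finset.mem_image, Finset.mem_filter, Finset.mem_offDiag,
      Finset.mem_univ, true_and, Prod.mk.injEq]
    constructor
    · rintro ⟨hne, h1, h2⟩
      have h2' : key b < key a := (hσ b a).mp h2
      by_cases hb : b = w
      · rw [hb] at hne h1 h2' ⊢
        have haw : a ≠ w := hne
        rw [hkw, hko a haw] at h2'
        have hale : π u ≤ π a := by
          by_contra hgt
          push_neg at hgt
          have hc : ((π a : ℕ) + 1 : ℚ) ≤ ((π u : ℕ) : ℚ) := by exact_mod_cast hgt
          linarith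
        exact ⟨a, ⟨hale, h1⟩, rfl, rfl⟩
      · exfalso
        by_cases ha : a = w
        · rw [ha] at h1 h2'
          rw [hkw, hko b hb] at h2'
          have hbu : π b < π u := by
            have : ((π b : ℕ) : ℚ) < ((π u : ℕ) : ℚ) := by linarith
            exact_mod_cast this
          exact absurd (lt_trans huw h1) (lt_asymm hbu)
        · rw [hko a ha, hko b hb] at h2'
          have : (π b : ℕ) < (π a : ℕ) := by exact_mod_cast h2'
          exact absurd h1 (lt_asymm this)
    · rintro ⟨z, ⟨hz1, hz2⟩, rfl, rfl⟩
      have hzw : z ≠ w := fun hh => by subst hh; exact lt_irrefl _ hz2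
      refine ⟨hzw, hz2, (hσ w z).mpr ?_⟩
      rw [hkw, hko z hzw]
      have h' : ((π u : ℕ) : ℚ) ≤ ((π z : ℕ) : ℚ) := by exact_mod_cast hz1
      linarith
  have h := median_flip hm σ
  rw [hD, Finset.sum_image (by intro x _ y _ hxy; simpa using hxy),
    Finset.sum_image (by intro x _ y _ hxy; simpa using hxy)] at h
  simpa using h

end Aux4
section Aux5
variable {C : Type*} [Fintype C] [DecidableEq C]

lemma key_bound {V : Multiset (Ranking C)} {π : Ranking C} (hm : IsKMedian 2 V π)
    {u w : C} (huw : π u < π w) {s : ℝ}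
    (hlow : ∀ z : C, π u < π z → π z < π w →
      (votesBefore V w z : ℝ) ≤ (1 - s) * (Multiset.card V : ℝ)) :
    2 * ((((univ : Finset C).filter fun z => π u < π z ∧ π z < π w).card : ℝ) + 1)
        * (votesBefore V w u : ℝ)
      ≤ ((3 - 2*s) * (((univ : Finset C).filter fun z => π u < π z ∧ π z < π w).card : ℝ) + 1)
        * (Multiset.card V : ℝ) := by
  classical
  set S := (univ : Finset C).filter (fun z => π u < π z ∧ π z < π w) with hSdef
  set T := (univ : Finset C).filter (fun z => π u < π z ∧ π z ≤ π w) with hTdef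
  have hwS : w ∉ S := by simp [hSdef]
  have hTS : T = insert w S := by
    ext z
    simp only [hTdef, hSdef, Finset.mem_filter, Finset.mem_univ, true_and, Finset.mem_insert]
    constructor
    · rintro ⟨h1, h2⟩
      rcases lt_or_eq_of_le h2 with h3 | h3
      · exact Or.inr ⟨h1, h3⟩
      · exact Or.inl (π.injective h3)
    · rintro (rfl | ⟨h1, h2⟩)
      · exact ⟨huw, le_refl _⟩
      · exact ⟨h1, h2.le⟩
  have hmr := move_right hm huw
  rw [← hTdef] at hmr
  have hpair : ∀ z ∈ T, votesBefore V u z + votesBefore V z u = Multiset.card V := by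
    intro z hz
    simp only [hTdef, Finset.mem_filter] at hz
    exact votesBefore_add (fun hh => absurd (hh ▸ hz.2.1) (lt_irrefl _))
  have hsumpair : ∑ z ∈ T, votesBefore V u z + ∑ z ∈ T, votesBefore V z u
      = T.card * Multiset.card V := by
    rw [← Finset.sum_add_distrib]
    rw [Finset.sum_congr rfl hpair, Finset.sum_const, smul_eq_mul]
  have hhalf : T.card * Multiset.card V ≤ 2 * ∑ z ∈ T, votesBefore V u z := by omega
  have hTsum : ∑ z ∈ T, votesBefore V u z
      = votesBefore V u w + ∑ z ∈ S, votesBefore V u z := by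
    rw [hTS, Finset.sum_insert hwS]
  have hScard : T.card = S.card + 1 := by rw [hTS, Finset.card_insert_of_notMem hwS]
  -- real versions
  set M : ℝ := (Multiset.card V : ℝ) with hM
  set K : ℝ := (S.card : ℝ) with hK
  have hSbound : ((∑ z ∈ S, votesBefore V u z : ℕ) : ℝ)
      ≤ K * ((votesBefore V u w : ℝ) + (1 - s) * M) := by
    rw [Nat.cast_sum]
    calc ∑ z ∈ S, ((votesBefore V u z : ℕ) : ℝ)
        ≤ ∑ z ∈ S, ((votesBefore V u w : ℝ) + (1 - s) * M) := by
          refine Finset.sum_le_sum (fun z hz => ?_)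
          simp only [hSdef, Finset.mem_filter, Finset.mem_univ, true_and] at hz
          have htri := votesBefore_triangle V u w z
          have hlz := hlow z hz.1 hz.2
          have : ((votesBefore V u z : ℕ) : ℝ)
              ≤ ((votesBefore V u w : ℕ) : ℝ) + ((votesBefore V w z : ℕ) : ℝ) := by
            exact_mod_cast htri
          linarith
      _ = K * ((votesBefore V u w : ℝ) + (1 - s) * M) := by
          rw [Finset.sum_const, nsmul_eq_mul, hK]
  have hhalfR : (K + 1) * M ≤ 2 * ((votesBefore V u w : ℝ)
      + ((∑ z ∈ S, votesBefore V u z : ℕ) : ℝ)) := by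
    have := hhalf
    rw [hScard, hTsum] at this
    have hcast : ((S.card + 1) * Multiset.card V : ℕ)
        ≤ (2 * (votesBefore V u w + ∑ z ∈ S, votesBefore V u z) : ℕ) := this
    calc (K + 1) * M = (((S.card + 1) * Multiset.card V : ℕ) : ℝ) := by
          push_cast [hK, hM]; ring
      _ ≤ ((2 * (votesBefore V u w + ∑ z ∈ S, votesBefore V u z) : ℕ) : ℝ) := by
          exact_mod_cast hcast
      _ = 2 * ((votesBefore V u w : ℝ) + ((∑ z ∈ S, votesBefore V u z : ℕ) : ℝ)) := by
          push_cast; ring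
  have huwne : u ≠ w := fun hh => absurd (hh ▸ huw) (lt_irrefl _)
  have haddR : (votesBefore V u w : ℝ) + (votesBefore V w u : ℝ) = M := by
    rw [hM]
    exact_mod_cast votesBefore_add (V := V) huwne
  nlinarith [hSbound, hhalfR, haddR]

lemma key_bound' {V : Multiset (Ranking C)} {π : Ranking C} (hm : IsKMedian 2 V π)
    {u w : C} (huw : π u < π w) {s : ℝ}
    (hlow : ∀ z : C, π u < π z → π z < π w →
      (votesBefore V z u : ℝ) ≤ (1 - s) * (Multiset.card V : ℝ)) :
    2 * ((((univ : Finset C).filter fun z => π u < π z ∧ π z < π w).card : ℝ) + 1)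
        * (votesBefore V w u : ℝ)
      ≤ ((3 - 2*s) * (((univ : Finset C).filter fun z => π u < π z ∧ π z < π w).card : ℝ) + 1)
        * (Multiset.card V : ℝ) := by
  classical
  set S := (univ : Finset C).filter (fun z => π u < π z ∧ π z < π w) with hSdef
  set T := (univ : Finset C).filter (fun z => π u ≤ π z ∧ π z < π w) with hTdef
  have huS : u ∉ S := by simp [hSdef]
  have hTS : T = insert u S := by
    ext z
    simp only [hTdef, hSdef, Finset.mem_filter, Finset.mem_univ, true_and, Finset.mem_insert]
    constructor
    · rintro ⟨h1, h2⟩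
      rcases lt_or_eq_of_le h1 with h3 | h3
      · exact Or.inr ⟨h3, h2⟩
      · exact Or.inl (π.injective h3).symm
    · rintro (rfl | ⟨h1, h2⟩)
      · exact ⟨le_refl _, huw⟩
      · exact ⟨h1.le, h2⟩
  have hmr := move_left hm huw
  rw [← hTdef] at hmr
  have hpair : ∀ z ∈ T, votesBefore V z w + votesBefore V w z = Multiset.card V := by
    intro z hz
    simp only [hTdef, Finset.mem_filter] at hz
    exact votesBefore_add (fun hh => absurd (hh ▸ hz.2.2) (lt_irrefl _))
  have hsumpair : ∑ z ∈ T, votesBefore V z w + ∑ z ∈ T, votesBefore V w z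
      = T.card * Multiset.card V := by
    rw [← Finset.sum_add_distrib]
    rw [Finset.sum_congr rfl hpair, Finset.sum_const, smul_eq_mul]
  have hhalf : T.card * Multiset.card V ≤ 2 * ∑ z ∈ T, votesBefore V z w := by omega
  have hTsum : ∑ z ∈ T, votesBefore V z w
      = votesBefore V u w + ∑ z ∈ S, votesBefore V z w := by
    rw [hTS, Finset.sum_insert huS]
  have hScard : T.card = S.card + 1 := by rw [hTS, Finset.card_insert_of_notMem huS]
  set M : ℝ := (Multiset.card V : ℝ) with hM
  set K : ℝ := (S.card : ℝ) with hK
  have hSbound : ((∑ z ∈ S, votesBefore V z w : ℕ) : ℝ)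
      ≤ K * ((votesBefore V u w : ℝ) + (1 - s) * M) := by
    rw [Nat.cast_sum]
    calc ∑ z ∈ S, ((votesBefore V z w : ℕ) : ℝ)
        ≤ ∑ z ∈ S, ((votesBefore V u w : ℝ) + (1 - s) * M) := by
          refine Finset.sum_le_sum (fun z hz => ?_)
          simp only [hSdef, Finset.mem_filter, Finset.mem_univ, true_and] at hz
          have htri := votesBefore_triangle V z u w
          have hlz := hlow z hz.1 hz.2
          have : ((votesBefore V z w : ℕ) : ℝ)
              ≤ ((votesBefore V z u : ℕ) : ℝ) + ((votesBefore V u w : ℕ) : ℝ) := by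
            exact_mod_cast htri
          linarith
      _ = K * ((votesBefore V u w : ℝ) + (1 - s) * M) := by
          rw [Finset.sum_const, nsmul_eq_mul, hK]
  have hhalfR : (K + 1) * M ≤ 2 * ((votesBefore V u w : ℝ)
      + ((∑ z ∈ S, votesBefore V z w : ℕ) : ℝ)) := by
    have := hhalf
    rw [hScard, hTsum] at this
    have hcast : ((S.card + 1) * Multiset.card V : ℕ)
        ≤ (2 * (votesBefore V u w + ∑ z ∈ S, votesBefore V z w) : ℕ) := this
    calc (K + 1) * M = (((S.card + 1) * Multiset.card V : ℕ) : ℝ) := by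
          push_cast [hK, hM]; ring
      _ ≤ ((2 * (votesBefore V u w + ∑ z ∈ S, votesBefore V z w) : ℕ) : ℝ) := by
          exact_mod_cast hcast
      _ = 2 * ((votesBefore V u w : ℝ) + ((∑ z ∈ S, votesBefore V z w : ℕ) : ℝ)) := by
          push_cast; ring
  have huwne : u ≠ w := fun hh => absurd (hh ▸ huw) (lt_irrefl _)
  have haddR : (votesBefore V u w : ℝ) + (votesBefore V w u : ℝ) = M := by
    rw [hM]
    exact_mod_cast votesBefore_add (V := V) huwne
  nlinarith [hSbound, hhalfR, haddR]

end Aux5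
lemma crit_lemma {n : ℕ} (hn3 : 3 ≤ n) {s : ℝ} (hs2 : s ≤ 3/4)
    (hn : (n : ℝ) ≤ (Real.sqrt ((1 - s) * (7 - 9 * s)) + 4 - 5 * s) / (3 - 4 * s)) :
    s < 3/4 ∧ (n : ℝ) * (3 - 4*s) < 8 - 10*s := by
  have hn3R : (3 : ℝ) ≤ (n : ℝ) := by exact_mod_cast hn3
  rcases lt_or_eq_of_le hs2 with hlt | heq
  · have h34 : (0:ℝ) < 3 - 4*s := by linarith
    have h45 : (0:ℝ) < 4 - 5*s := by linarith
    have hX : (1 - s) * (7 - 9*s) < (4 - 5*s)^2 := by nlinarith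
    have hXnn : (0:ℝ) ≤ (1 - s) * (7 - 9*s) := by nlinarith
    have hsq : Real.sqrt ((1 - s) * (7 - 9 * s)) < 4 - 5*s := by
      rw [show (4 - 5*s) = Real.sqrt ((4 - 5*s)^2) from (Real.sqrt_sq h45.le).symm]
      exact Real.sqrt_lt_sqrt hXnn hX
    have hmul : (n : ℝ) * (3 - 4*s) ≤ Real.sqrt ((1 - s) * (7 - 9 * s)) + 4 - 5*s := by
      rw [show (Real.sqrt ((1 - s) * (7 - 9 * s)) + 4 - 5 * s)
          = (Real.sqrt ((1 - s) * (7 - 9 * s)) + 4 - 5 * s) from rfl] at hn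
      have := (le_div_iff₀ h34).mp hn
      linarith
    exact ⟨hlt, by linarith⟩
  · exfalso
    rw [show (3 - 4*s) = 0 by rw [heq]; norm_num, div_zero] at hn
    linarith

lemma core1 {C : Type*} [Fintype C] [DecidableEq C]
    (V : Multiset (Ranking C)) (hV : V ≠ 0)
    (s ε : ℝ) (hs1 : 1 / 2 ≤ s) (hs2 : s ≤ 3 / 4)
    (hn3 : 3 ≤ Fintype.card C)
    (hn : (Fintype.card C : ℝ) ≤
      (Real.sqrt ((1 - s) * (7 - 9 * s)) + 4 - 5 * s) / (3 - 4 * s))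
    (hε : (s - 1) / ((Fintype.card C : ℝ) - 1) < ε)
    (x : C) (hx : NonDirty V s x)
    (y : C) (hy : y ≠ x) (hq : AtLeastRatio V (3 / 2 - s + ε) x y)
    (π : Ranking C) (hm : IsKMedian 2 V π) : Before π x y := by
  classical
  by_contra hcon
  have hyx : Before π y x := by
    rcases before_total (π := π) hy with h | h
    · exact h
    · exact absurd h hcon
  obtain ⟨hs34, hcrit⟩ := crit_lemma hn3 hs2 hn
  set n := Fintype.card C with hndef
  set M : ℝ := (Multiset.card V : ℝ) with hM
  have hm0 : (0:ℝ) < M := by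
    rw [hM]
    exact_mod_cast Multiset.card_pos.mpr hV
  have hnR : (3:ℝ) ≤ (n:ℝ) := by exact_mod_cast hn3
  set S := (univ : Finset C).filter (fun z => π y < π z ∧ π z < π x) with hS
  have hxS : x ∉ S := by simp [hS]
  have hyS : y ∉ S := by simp [hS]
  have hkn : S.card + 2 ≤ n := by
    have hyxS : y ∉ insert x S := by
      simp only [Finset.mem_insert]
      rintro (h | h)
      · exact hy h
      · exact hyS h
    calc S.card + 2 = (insert y (insert x S)).card := by
          rw [Finset.card_insert_of_notMem hyxS, Finset.card_insert_of_notMem hxS]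
      _ ≤ n := by
          rw [hndef, ← Finset.card_univ]
          exact Finset.card_le_card (Finset.subset_univ _)
  by_cases hex : ∃ z ∈ S, s * M ≤ (votesBefore V x z : ℝ)
  · -- a "high" candidate exists: pick the one closest to x
    obtain ⟨z0, hz0H, hmax⟩ := Finset.exists_max_image
      (S.filter (fun z => s * M ≤ (votesBefore V x z : ℝ))) (fun z => π z)
      (by obtain ⟨z, hz1, hz2⟩ := hex; exact ⟨z, Finset.mem_filter.mpr ⟨hz1, hz2⟩⟩)
    obtain ⟨hz0S, hz0high⟩ := Finset.mem_filter.mp hz0H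
    have hz0mem := Finset.mem_filter.mp hz0S
    obtain ⟨-, hyz0, hz0x⟩ : z0 ∈ univ ∧ π y < π z0 ∧ π z0 < π x := by
      simpa [hS] using hz0S
    have hlow : ∀ z : C, π z0 < π z → π z < π x → (votesBefore V x z : ℝ) ≤ (1 - s) * M := by
      intro z h1 h2
      have hzS : z ∈ S := by
        simp only [hS, Finset.mem_filter, Finset.mem_univ, true_and]
        exact ⟨lt_trans hyz0 h1, h2⟩
      have hnh : ¬ (s * M ≤ (votesBefore V x z : ℝ)) := by
        intro hcontra
        have hmem : z ∈ S.filter (fun z => s * M ≤ (votesBefore V x z : ℝ)) :=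
          Finset.mem_filter.mpr ⟨hzS, hcontra⟩
        exact absurd h1 (not_lt.mpr (hmax z hmem))
      have hzx : z ≠ x := before_ne h2
      rcases hx z hzx with hcase | hcase
      · exact absurd (by rw [hM]; exact hcase) hnh
      · have hadd : (votesBefore V x z : ℝ) + (votesBefore V z x : ℝ) = M := by
          rw [hM]
          exact_mod_cast votesBefore_add (V := V) (Ne.symm hzx)
        have hc : s * M ≤ (votesBefore V z x : ℝ) := by rw [hM]; exact hcase
        linarith
    have hkey := key_bound hm hz0x hlow
    rw [← hM] at hkey
    set S' := (univ : Finset C).filter (fun z => π z0 < π z ∧ π z < π x) with hS'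
    have hsub : S' ⊆ S.erase z0 := by
      intro z hz
      simp only [hS', Finset.mem_filter, Finset.mem_univ, true_and] at hz
      refine Finset.mem_erase.mpr ⟨?_, ?_⟩
      · rintro rfl; exact absurd hz.1 (lt_irrefl _)
      · simp only [hS, Finset.mem_filter, Finset.mem_univ, true_and]
        exact ⟨lt_trans hyz0 hz.1, hz.2⟩
    have hjn : S'.card + 3 ≤ n := by
      have h1 : S'.card ≤ (S.erase z0).card := Finset.card_le_card hsub
      have h2 : (S.erase z0).card = S.card - 1 := Finset.card_erase_of_mem hz0S
      have h3 : 1 ≤ S.card := Finset.card_pos.mpr ⟨z0, hz0S⟩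
      omega
    set J : ℝ := (S'.card : ℝ) with hJ
    have hjnR : J + 3 ≤ (n : ℝ) := by
      rw [hJ]
      exact_mod_cast hjn
    have hJ0 : (0:ℝ) ≤ J := by rw [hJ]; exact Nat.cast_nonneg _
    -- 2 (J+1) v(x,z0) ≤ ((3-2s)J+1) M ; s M ≤ v(x,z0)
    have e1 : 2 * (J + 1) * (s * M) ≤ ((3 - 2*s) * J + 1) * M := by
      have h2 : 2 * (J + 1) * (s * M) ≤ 2 * (J + 1) * (votesBefore V x z0 : ℝ) := by
        have : (0:ℝ) ≤ 2 * (J + 1) := by linarith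
        exact mul_le_mul_of_nonneg_left hz0high this
      linarith
    have e3 : 2 * (J + 1) * s ≤ (3 - 2*s) * J + 1 := by
      have := (mul_le_mul_iff_of_pos_right hm0).mp (by linarith [e1] :
        (2 * (J + 1) * s) * M ≤ ((3 - 2*s) * J + 1) * M)
      linarith
    have h34 : (0:ℝ) < 3 - 4*s := by linarith
    have e4 : J * (3 - 4*s) ≤ ((n:ℝ) - 3) * (3 - 4*s) :=
      mul_le_mul_of_nonneg_right (by linarith) h34.le
    nlinarith [e3, e4, hcrit]
  · push_neg at hex
    have hlow : ∀ z : C, π y < π z → π z < π x → (votesBefore V x z : ℝ) ≤ (1 - s) * M := by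
      intro z h1 h2
      have hzS : z ∈ S := by
        simp only [hS, Finset.mem_filter, Finset.mem_univ, true_and]
        exact ⟨h1, h2⟩
      have hnh := hex z hzS
      have hzx : z ≠ x := before_ne h2
      rcases hx z hzx with hcase | hcase
      · exact absurd (by rw [hM]; exact hcase : s * M ≤ (votesBefore V x z : ℝ)) (not_le.mpr hnh)
      · have hadd : (votesBefore V x z : ℝ) + (votesBefore V z x : ℝ) = M := by
          rw [hM]
          exact_mod_cast votesBefore_add (V := V) (Ne.symm hzx)
        have hc : s * M ≤ (votesBefore V z x : ℝ) := by rw [hM]; exact hcase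
        linarith
    have hkey := key_bound hm hyx hlow
    rw [← hS, ← hM] at hkey
    set K : ℝ := (S.card : ℝ) with hK
    have hK0 : (0:ℝ) ≤ K := by rw [hK]; exact Nat.cast_nonneg _
    have hKn : K + 2 ≤ (n:ℝ) := by rw [hK]; exact_mod_cast hkn
    have hq' : (3/2 - s + ε) * M ≤ (votesBefore V x y : ℝ) := by rw [hM]; exact hq
    have hK1 : (0:ℝ) < K + 1 := by linarith
    have hN1 : (0:ℝ) < (n:ℝ) - 1 := by linarith
    have hdiv : (s - 1) / (K + 1) ≤ (s - 1) / ((n:ℝ) - 1) := by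
      rw [div_le_div_iff₀ hK1 hN1]
      nlinarith
    have heps : s - 1 < ε * (K + 1) := by
      have h1 : (s - 1) / (K + 1) < ε := lt_of_le_of_lt hdiv hε
      have := (div_lt_iff₀ hK1).mp h1
      linarith
    have e1 : 2 * (K + 1) * ((3/2 - s + ε) * M) ≤ ((3 - 2*s) * K + 1) * M := by
      have h2 : 2 * (K + 1) * ((3/2 - s + ε) * M)
          ≤ 2 * (K + 1) * (votesBefore V x y : ℝ) := by
        have : (0:ℝ) ≤ 2 * (K + 1) := by linarith
        exact mul_le_mul_of_nonneg_left hq' this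
      linarith
    have e3 : 2 * (K + 1) * (3/2 - s + ε) ≤ (3 - 2*s) * K + 1 := by
      have := (mul_le_mul_iff_of_pos_right hm0).mp (by linarith [e1] :
        (2 * (K + 1) * (3/2 - s + ε)) * M ≤ ((3 - 2*s) * K + 1) * M)
      linarith
    nlinarith [e3, heps]
lemma core2 {C : Type*} [Fintype C] [DecidableEq C]
    (V : Multiset (Ranking C)) (hV : V ≠ 0)
    (s ε : ℝ) (hs1 : 1 / 2 ≤ s) (hs2 : s ≤ 3 / 4)
    (hn3 : 3 ≤ Fintype.card C)
    (hn : (Fintype.card C : ℝ) ≤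
      (Real.sqrt ((1 - s) * (7 - 9 * s)) + 4 - 5 * s) / (3 - 4 * s))
    (hε : (s - 1) / ((Fintype.card C : ℝ) - 1) < ε)
    (x : C) (hx : NonDirty V s x)
    (y : C) (hy : y ≠ x) (hq : AtLeastRatio V (3 / 2 - s + ε) y x)
    (π : Ranking C) (hm : IsKMedian 2 V π) : Before π y x := by
  classical
  by_contra hcon
  have hxy : Before π x y := by
    rcases before_total (π := π) hy with h | h
    · exact absurd h hcon
    · exact h
  obtain ⟨hs34, hcrit⟩ := crit_lemma hn3 hs2 hn
  set n := Fintype.card C with hndef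
  set M : ℝ := (Multiset.card V : ℝ) with hM
  have hm0 : (0:ℝ) < M := by
    rw [hM]
    exact_mod_cast Multiset.card_pos.mpr hV
  have hnR : (3:ℝ) ≤ (n:ℝ) := by exact_mod_cast hn3
  set S := (univ : Finset C).filter (fun z => π x < π z ∧ π z < π y) with hS
  have hxS : x ∉ S := by simp [hS]
  have hyS : y ∉ S := by simp [hS]
  have hkn : S.card + 2 ≤ n := by
    have hyxS : y ∉ insert x S := by
      simp only [Finset.mem_insert]
      rintro (h | h)
      · exact hy h
      · exact hyS h
    calc S.card + 2 = (insert y (insert x S)).card := by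
          rw [Finset.card_insert_of_notMem hyxS, Finset.card_insert_of_notMem hxS]
      _ ≤ n := by
          rw [hndef, ← Finset.card_univ]
          exact Finset.card_le_card (Finset.subset_univ _)
  by_cases hex : ∃ z ∈ S, s * M ≤ (votesBefore V z x : ℝ)
  · obtain ⟨z0, hz0H, hmin⟩ := Finset.exists_min_image
      (S.filter (fun z => s * M ≤ (votesBefore V z x : ℝ))) (fun z => π z)
      (by obtain ⟨z, hz1, hz2⟩ := hex; exact ⟨z, Finset.mem_filter.mpr ⟨hz1, hz2⟩⟩)
    obtain ⟨hz0S, hz0high⟩ := Finset.mem_filter.mp hz0H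
    obtain ⟨-, hxz0, hz0y⟩ : z0 ∈ univ ∧ π x < π z0 ∧ π z0 < π y := by
      simpa [hS] using hz0S
    have hlow : ∀ z : C, π x < π z → π z < π z0 → (votesBefore V z x : ℝ) ≤ (1 - s) * M := by
      intro z h1 h2
      have hzS : z ∈ S := by
        simp only [hS, Finset.mem_filter, Finset.mem_univ, true_and]
        exact ⟨h1, lt_trans h2 hz0y⟩
      have hnh : ¬ (s * M ≤ (votesBefore V z x : ℝ)) := by
        intro hcontra
        have hmem : z ∈ S.filter (fun z => s * M ≤ (votesBefore V z x : ℝ)) :=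
          Finset.mem_filter.mpr ⟨hzS, hcontra⟩
        exact absurd h2 (not_lt.mpr (hmin z hmem))
      have hzx : z ≠ x := (before_ne h1).symm
      rcases hx z hzx with hcase | hcase
      · have hadd : (votesBefore V x z : ℝ) + (votesBefore V z x : ℝ) = M := by
          rw [hM]
          exact_mod_cast votesBefore_add (V := V) (Ne.symm hzx)
        have hc : s * M ≤ (votesBefore V x z : ℝ) := by rw [hM]; exact hcase
        linarith
      · exact absurd (by rw [hM]; exact hcase : s * M ≤ (votesBefore V z x : ℝ)) hnh
    have hkey := key_bound' hm hxz0 hlow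
    rw [← hM] at hkey
    set S' := (univ : Finset C).filter (fun z => π x < π z ∧ π z < π z0) with hS'
    have hsub : S' ⊆ S.erase z0 := by
      intro z hz
      simp only [hS', Finset.mem_filter, Finset.mem_univ, true_and] at hz
      refine Finset.mem_erase.mpr ⟨?_, ?_⟩
      · rintro rfl; exact absurd hz.2 (lt_irrefl _)
      · simp only [hS, Finset.mem_filter, Finset.mem_univ, true_and]
        exact ⟨hz.1, lt_trans hz.2 hz0y⟩
    have hjn : S'.card + 3 ≤ n := by
      have h1 : S'.card ≤ (S.erase z0).card := Finset.card_le_card hsub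
      have h2 : (S.erase z0).card = S.card - 1 := Finset.card_erase_of_mem hz0S
      have h3 : 1 ≤ S.card := Finset.card_pos.mpr ⟨z0, hz0S⟩
      omega
    set J : ℝ := (S'.card : ℝ) with hJ
    have hjnR : J + 3 ≤ (n : ℝ) := by
      rw [hJ]
      exact_mod_cast hjn
    have hJ0 : (0:ℝ) ≤ J := by rw [hJ]; exact Nat.cast_nonneg _
    have e1 : 2 * (J + 1) * (s * M) ≤ ((3 - 2*s) * J + 1) * M := by
      have h2 : 2 * (J + 1) * (s * M) ≤ 2 * (J + 1) * (votesBefore V z0 x : ℝ) := by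
        have : (0:ℝ) ≤ 2 * (J + 1) := by linarith
        exact mul_le_mul_of_nonneg_left hz0high this
      linarith
    have e3 : 2 * (J + 1) * s ≤ (3 - 2*s) * J + 1 := by
      have := (mul_le_mul_iff_of_pos_right hm0).mp (by linarith [e1] :
        (2 * (J + 1) * s) * M ≤ ((3 - 2*s) * J + 1) * M)
      linarith
    have h34 : (0:ℝ) < 3 - 4*s := by linarith
    have e4 : J * (3 - 4*s) ≤ ((n:ℝ) - 3) * (3 - 4*s) :=
      mul_le_mul_of_nonneg_right (by linarith) h34.le
    nlinarith [e3, e4, hcrit]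
  · push_neg at hex
    have hlow : ∀ z : C, π x < π z → π z < π y → (votesBefore V z x : ℝ) ≤ (1 - s) * M := by
      intro z h1 h2
      have hzS : z ∈ S := by
        simp only [hS, Finset.mem_filter, Finset.mem_univ, true_and]
        exact ⟨h1, h2⟩
      have hnh := hex z hzS
      have hzx : z ≠ x := (before_ne h1).symm
      rcases hx z hzx with hcase | hcase
      · have hadd : (votesBefore V x z : ℝ) + (votesBefore V z x : ℝ) = M := by
          rw [hM]
          exact_mod_cast votesBefore_add (V := V) (Ne.symm hzx)
        have hc : s * M ≤ (votesBefore V x z : ℝ) := by rw [hM]; exact hcase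
        linarith
      · exact absurd (by rw [hM]; exact hcase : s * M ≤ (votesBefore V z x : ℝ))
          (not_le.mpr hnh)
    have hkey := key_bound' hm hxy hlow
    rw [← hS, ← hM] at hkey
    set K : ℝ := (S.card : ℝ) with hK
    have hK0 : (0:ℝ) ≤ K := by rw [hK]; exact Nat.cast_nonneg _
    have hKn : K + 2 ≤ (n:ℝ) := by rw [hK]; exact_mod_cast hkn
    have hq' : (3/2 - s + ε) * M ≤ (votesBefore V y x : ℝ) := by rw [hM]; exact hq
    have hK1 : (0:ℝ) < K + 1 := by linarith
    have hN1 : (0:ℝ) < (n:ℝ) - 1 := by linarith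
    have hdiv : (s - 1) / (K + 1) ≤ (s - 1) / ((n:ℝ) - 1) := by
      rw [div_le_div_iff₀ hK1 hN1]
      nlinarith
    have heps : s - 1 < ε * (K + 1) := by
      have h1 : (s - 1) / (K + 1) < ε := lt_of_le_of_lt hdiv hε
      have := (div_lt_iff₀ hK1).mp h1
      linarith
    have e1 : 2 * (K + 1) * ((3/2 - s + ε) * M) ≤ ((3 - 2*s) * K + 1) * M := by
      have h2 : 2 * (K + 1) * ((3/2 - s + ε) * M)
          ≤ 2 * (K + 1) * (votesBefore V y x : ℝ) := by
        have : (0:ℝ) ≤ 2 * (K + 1) := by linarith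
        exact mul_le_mul_of_nonneg_left hq' this
      linarith
    have e3 : 2 * (K + 1) * (3/2 - s + ε) ≤ (3 - 2*s) * K + 1 := by
      have := (mul_le_mul_iff_of_pos_right hm0).mp (by linarith [e1] :
        (2 * (K + 1) * (3/2 - s + ε)) * M ≤ ((3 - 2*s) * K + 1) * M)
      linarith
    nlinarith [e3, heps]


/-- the extended `s`-majority rule for the Kemeny (2-wise) scheme. -/
theorem stmt2 {C : Type*} [Fintype C] [DecidableEq C]
    (V : Multiset (Ranking C)) (hV : V ≠ 0)
    (s ε : ℝ) (hs1 : 1 / 2 ≤ s) (hs2 : s ≤ 3 / 4)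
    (hn3 : 3 ≤ Fintype.card C)
    (hn : (Fintype.card C : ℝ) ≤
      (Real.sqrt ((1 - s) * (7 - 9 * s)) + 4 - 5 * s) / (3 - 4 * s))
    (hε : (s - 1) / ((Fintype.card C : ℝ) - 1) < ε)
    (x : C) (hx : NonDirty V s x) :
    ∀ y : C, y ≠ x →
      (AtLeastRatio V (3 / 2 - s + ε) x y →
        ∀ π : Ranking C, IsKMedian 2 V π → Before π x y) ∧
      (AtLeastRatio V (3 / 2 - s + ε) y x →
        ∀ π : Ranking C, IsKMedian 2 V π → Before π y x) := by
  intro y hy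
  exact ⟨fun hq π hm => core1 V hV s ε hs1 hs2 hn3 hn hε x hx y hy hq π hm,
    fun hq π hm => core2 V hV s ε hs1 hs2 hn3 hn hε x hx y hy hq π hm⟩
end

section
/- Let x be a candidate in an election with n ≥ 2 candidates. Suppose x ≥_α y for every candidate y ≠ x, where α > (3n−5)/(4n−6). Then x is ranked first in every 3-wise median of the election. In particular, if x ≥_{3/4} y for every candidate y ≠ x, then x is ranked first in every 3-wise median. -/
open Finset

set_option linter.unusedSectionVars false

section Move
variable {n : ℕ}

/-- the permutation of `Fin n` moving `k` to `0`, shifting everything before `k` up by one. -/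
def moveEquiv (k : Fin n) : Fin n ≃ Fin n where
  toFun j := if h : j.val < k.val then ⟨j.val+1, by omega⟩ else if j = k then ⟨0, by omega⟩ else j
  invFun j := if h : j.val = 0 then k else if h2 : j.val ≤ k.val then ⟨j.val-1, by omega⟩ else j
  left_inv j := by
    dsimp only
    by_cases h1 : j.val < k.val
    · simp only [dif_pos h1]
      have h0 : ¬ (j.val + 1 = 0) := by omega
      rw [dif_neg h0]
      have hle : j.val + 1 ≤ k.val := by omega
      rw [dif_pos hle]
      exact Fin.ext (by simp)
    · by_cases h2 : j = k
      · subst h2; rw [dif_neg h1, if_pos rfl]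
        rw [dif_pos rfl]
      · have hk : j.val ≠ k.val := fun h => h2 (Fin.ext h)
        rw [dif_neg h1, if_neg h2]
        have h0 : ¬ (j.val = 0) := by omega
        have h3 : ¬ (j.val ≤ k.val) := by omega
        rw [dif_neg h0, dif_neg h3]
  right_inv j := by
    dsimp only
    by_cases h0 : j.val = 0
    · rw [dif_pos h0]
      rw [dif_neg (lt_irrefl k.val), if_pos rfl]
      exact Fin.ext (by simp; omega)
    · by_cases h2 : j.val ≤ k.val
      · rw [dif_neg h0, dif_pos h2]
        have h1 : ((⟨j.val-1, by omega⟩ : Fin n)).val < k.val := by simp; omega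
        rw [dif_pos h1]
        exact Fin.ext (by simp; omega)
      · rw [dif_neg h0, dif_neg h2]
        have h1 : ¬ (j.val < k.val) := by omega
        have h3 : j ≠ k := by intro h; subst h; omega
        rw [dif_neg h1, if_neg h3]

lemma moveEquiv_self (k : Fin n) : (moveEquiv k k).val = 0 := by
  simp [moveEquiv]

lemma moveEquiv_lt_iff (k : Fin n) {a b : Fin n} (ha : a ≠ k) (hb : b ≠ k) :
    moveEquiv k a < moveEquiv k b ↔ a < b := by
  have ha' : a.val ≠ k.val := fun h => ha (Fin.ext h)
  have hb' : b.val ≠ k.val := fun h => hb (Fin.ext h)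
  simp only [moveEquiv, Equiv.coe_fn_mk, Fin.lt_iff_val_lt_val]
  split_ifs <;> simp_all [Fin.ext_iff] <;> omega

end Move

section TopLemmas
variable {C : Type*} [Fintype C] [DecidableEq C]

lemma topS_eq_of (π : Ranking C) {S : Finset C} {x : C} (hx : x ∈ S)
    (h : ∀ y ∈ S, π x ≤ π y) : topS π S = (x : WithTop C) := by
  have hmin : (S.image π).min = (π x : WithTop (Fin (Fintype.card C))) := by
    apply le_antisymm
    · exact Finset.min_le (Finset.mem_image_of_mem π hx)
    · apply Finset.le_min
      intro b hb
      obtain ⟨y, hy, rfl⟩ := Finset.mem_image.mp hb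
      exact_mod_cast h y hy
  simp [topS, hmin]

lemma topS_spec (π : Ranking C) {S : Finset C} (hS : S.Nonempty) :
    ∃ a ∈ S, topS π S = (a : WithTop C) ∧ ∀ y ∈ S, π a ≤ π y := by
  obtain ⟨b, hb⟩ := Finset.min_of_nonempty (hS.image π)
  have hbmem := Finset.mem_of_min hb
  obtain ⟨a, ha, rfl⟩ := Finset.mem_image.mp hbmem
  refine ⟨a, ha, ?_, ?_⟩
  · simp [topS, hb]
  · intro y hy
    exact_mod_cast Finset.min_le_of_eq (Finset.mem_image_of_mem π hy) hb

lemma topS_card_le_one (π σ : Ranking C) {S : Finset C} (h : S.card ≤ 1) :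
    topS π S = topS σ S := by
  rcases S.eq_empty_or_nonempty with rfl | hS
  · simp only [topS, Finset.image_empty, Finset.min_empty, WithTop.map_top]
  · have h1 : S.card = 1 := le_antisymm h (Finset.card_pos.mpr hS)
    obtain ⟨a, rfl⟩ := Finset.card_eq_one.mp h1
    rw [topS_eq_of π (Finset.mem_singleton_self a), topS_eq_of σ (Finset.mem_singleton_self a)]
    all_goals intro y hy; rw [Finset.mem_singleton.mp hy]

/-- move `x` to the top of the ranking `π`. -/
def moveTop (π : Ranking C) (x : C) : Ranking C := π.trans (moveEquiv (π x))

lemma moveTop_before (π : Ranking C) {x y : C} (h : y ≠ x) : Before (moveTop π x) x y := by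
  have h1 : ((moveTop π x) x).val = 0 := moveEquiv_self _
  have h2 : (moveTop π x) y ≠ (moveTop π x) x := fun hc => h ((moveTop π x).injective hc)
  have h3 : ((moveTop π x) y).val ≠ 0 := by
    rw [← h1]; exact fun hc => h2 (Fin.ext hc)
  show (moveTop π x) x < (moveTop π x) y
  rw [Fin.lt_iff_val_lt_val, h1]
  omega

lemma moveTop_before_iff (π : Ranking C) {x y z : C} (hy : y ≠ x) (hz : z ≠ x) :
    Before (moveTop π x) y z ↔ Before π y z := by
  unfold Before moveTop
  simp only [Equiv.trans_apply]
  exact moveEquiv_lt_iff _ (fun h => hy (π.injective h)) (fun h => hz (π.injective h))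

lemma topS_moveTop_mem (π : Ranking C) {x : C} {S : Finset C} (hx : x ∈ S) :
    topS (moveTop π x) S = (x : WithTop C) := by
  apply topS_eq_of _ hx
  intro y hy
  rcases eq_or_ne y x with rfl | h
  · exact le_rfl
  · exact le_of_lt (moveTop_before π h)

lemma topS_moveTop_notMem (π : Ranking C) {x : C} {S : Finset C} (hx : x ∉ S) :
    topS (moveTop π x) S = topS π S := by
  rcases S.eq_empty_or_nonempty with rfl | hS
  · exact topS_card_le_one _ _ (by simp)
  · obtain ⟨a, haS, hatop, hamin⟩ := topS_spec π hS
    rw [hatop]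
    apply topS_eq_of _ haS
    intro y hy
    rcases eq_or_ne y a with rfl | h
    · exact le_rfl
    · have hne : π a ≠ π y := fun hc => h (π.injective hc).symm
      have hlt : Before π a y := lt_of_le_of_ne (hamin y hy) hne
      have hax : a ≠ x := by intro hc; subst hc; exact hx haS
      have hyx : y ≠ x := by intro hc; subst hc; exact hx hy
      exact le_of_lt ((moveTop_before_iff π hax hyx).mpr hlt)

end TopLemmas

section SumLemmas

lemma multiset_sum_comm {α β M : Type*} [AddCommMonoid M] (V : Multiset α) (D : Finset β)
    (g : β → α → M) :
    (V.map (fun σ => ∑ S ∈ D, g S σ)).sum = ∑ S ∈ D, (V.map (g S)).sum := by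
  induction V using Multiset.induction_on with
  | empty => simp
  | cons a s ih => simp [ih, Finset.sum_add_distrib]

lemma sum_map_ite {α : Type*} (V : Multiset α) (p : α → Prop) [DecidablePred p] :
    (V.map (fun a => if p a then (1:ℕ) else 0)).sum = Multiset.card (V.filter p) := by
  induction V using Multiset.induction_on with
  | empty => simp
  | cons a s ih =>
    by_cases hp : p a <;>
      simp [Multiset.filter_cons_of_pos, Multiset.filter_cons_of_neg, hp, ih] <;> omega

lemma card_filter_and_le {α : Type*} (V : Multiset α) (p q : α → Prop)
    [DecidablePred p] [DecidablePred q] :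
    Multiset.card (V.filter p) + Multiset.card (V.filter q) ≤
      Multiset.card (V.filter (fun a => p a ∧ q a)) + Multiset.card V := by
  induction V using Multiset.induction_on with
  | empty => simp
  | cons a s ih =>
    by_cases hp : p a <;> by_cases hq : q a <;>
      simp [Multiset.filter_cons_of_pos, Multiset.filter_cons_of_neg, hp, hq] <;>
      omega

end SumLemmas

lemma keyLemma {C : Type*} [Fintype C] [DecidableEq C]
    (hn : 2 ≤ Fintype.card C)
    (V : Multiset (Ranking C)) (hV : V ≠ 0) (x : C) (α : ℝ)
    (hα : (3 * (Fintype.card C : ℝ) - 5) / (4 * (Fintype.card C : ℝ) - 6) < α)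
    (hxy : ∀ y : C, y ≠ x → AtLeastRatio V α x y)
    (π : Ranking C) (hmed : IsKMedian 3 V π) : RankedFirst π x := by
  classical
  by_contra hnot
  have hex : ∃ y, y ≠ x ∧ ¬ Before π x y := by
    by_contra h
    push_neg at h
    exact hnot (fun y hy => h y hy)
  obtain ⟨y₀, hy₀x, hy₀⟩ := hex
  have hy₀B : Before π y₀ x := by
    have hne : π y₀ ≠ π x := fun hc => hy₀x (π.injective hc)
    rcases lt_or_gt_of_ne hne with h | h
    · exact h
    · exact absurd h hy₀
  set n := Fintype.card C with hndef
  set m := Multiset.card V with hmdef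
  have hm1 : 1 ≤ m := by
    rw [hmdef, Nat.one_le_iff_ne_zero]
    simpa using hV
  set π' := moveTop π x with hπ'
  have hle := hmed π'
  -- the domain of subsets of size ≤ 3
  set Dom : Finset (Finset C) := Finset.univ.powerset.filter (fun S => S.card ≤ 3) with hDomdef
  have hkdV : ∀ ρ : Ranking C, kDistV 3 ρ V =
      ∑ S ∈ Dom, Multiset.card (V.filter (fun σ => topS ρ S ≠ topS σ S)) := by
    intro ρ
    have h1 : ∀ σ : Ranking C, kDist 3 ρ σ =
        ∑ S ∈ Dom, (if topS ρ S ≠ topS σ S then 1 else 0) := by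
      intro σ
      rw [kDist, ← Finset.filter_filter, Finset.card_filter, hDomdef]
    rw [kDistV]
    calc (V.map (fun σ => kDist 3 ρ σ)).sum
        = (V.map (fun σ => ∑ S ∈ Dom, (if topS ρ S ≠ topS σ S then 1 else 0))).sum := by
          congr 1
          exact Multiset.map_congr rfl (fun σ _ => h1 σ)
      _ = ∑ S ∈ Dom, (V.map (fun σ => if topS ρ S ≠ topS σ S then 1 else 0)).sum :=
          multiset_sum_comm V Dom _
      _ = _ := Finset.sum_congr rfl (fun S _ => sum_map_ite V _)
  -- the changed sets
  set D : Finset (Finset C) := Dom.filter (fun S => topS π S ≠ topS π' S) with hDdef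
  have hDmem : ∀ S ∈ D, x ∈ S ∧ 2 ≤ S.card ∧ S.card ≤ 3 ∧
      topS π' S = (x : WithTop C) ∧ topS π S ≠ (x : WithTop C) := by
    intro S hS
    rw [hDdef, Finset.mem_filter] at hS
    obtain ⟨hSDom, hne⟩ := hS
    rw [hDomdef, Finset.mem_filter] at hSDom
    have hc3 : S.card ≤ 3 := hSDom.2
    have hxS : x ∈ S := by
      by_contra hx
      exact hne (topS_moveTop_notMem π hx).symm
    have hc2 : 2 ≤ S.card := by
      by_contra h
      push_neg at h
      exact hne (topS_card_le_one π π' (by omega))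
    have htop' : topS π' S = (x : WithTop C) := topS_moveTop_mem π hxS
    exact ⟨hxS, hc2, hc3, htop', fun hc => hne (hc.trans htop'.symm)⟩
  -- vote counts
  set c : Finset C → ℕ := fun S => Multiset.card (V.filter (fun σ => topS σ S = (x : WithTop C)))
    with hcdef
  have claim1 : ∀ S ∈ D,
      Multiset.card (V.filter (fun σ => topS π' S ≠ topS σ S)) + c S = m := by
    intro S hS
    obtain ⟨_, _, _, htop', _⟩ := hDmem S hS
    have hflt : V.filter (fun σ => topS π' S ≠ topS σ S) =
        V.filter (fun σ => ¬ (topS σ S = (x : WithTop C))) := by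
      apply Multiset.filter_congr
      intro σ _
      rw [htop']
      exact ⟨fun h hc => h hc.symm, fun h hc => h hc.symm⟩
    rw [hflt, hcdef]
    have := Multiset.filter_add_not (fun σ => topS σ S = (x : WithTop C)) V
    calc Multiset.card (V.filter (fun σ => ¬ topS σ S = (x : WithTop C))) +
          Multiset.card (V.filter (fun σ => topS σ S = (x : WithTop C)))
        = Multiset.card (V.filter (fun σ => topS σ S = (x : WithTop C)) +
            V.filter (fun σ => ¬ topS σ S = (x : WithTop C))) := by
          rw [Multiset.card_add]; omega
      _ = m := by rw [this, hmdef]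
  have claim2 : ∀ S ∈ D,
      c S ≤ Multiset.card (V.filter (fun σ => topS π S ≠ topS σ S)) := by
    intro S hS
    obtain ⟨_, _, _, _, htopne⟩ := hDmem S hS
    apply Multiset.card_le_card
    apply Multiset.monotone_filter_right
    intro σ hσ
    rw [hσ]
    exact htopne
  have claim3 : ∀ S ∈ D, S.card = 2 → α * m ≤ (c S : ℝ) := by
    intro S hS hcard
    obtain ⟨hxS, _, _, _, _⟩ := hDmem S hS
    obtain ⟨u, v, huv, rfl⟩ := Finset.card_eq_two.mp hcard
    have hxuv : x = u ∨ x = v := by simpa using hxS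
    obtain ⟨y, hyx, hSeq⟩ : ∃ y, y ≠ x ∧ ({u, v} : Finset C) = {x, y} := by
      rcases hxuv with rfl | rfl
      · exact ⟨v, fun h => huv h.symm, rfl⟩
      · exact ⟨u, fun h => huv h, by rw [Finset.pair_comm]⟩
    have hmono : votesBefore V x y ≤ c ({u, v} : Finset C) := by
      rw [votesBefore, hcdef]
      apply Multiset.card_le_card
      apply Multiset.monotone_filter_right
      intro σ hσ
      rw [hSeq]
      apply topS_eq_of σ (Finset.mem_insert_self x {y})
      intro w hw
      rcases Finset.mem_insert.mp hw with rfl | hw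
      · exact le_rfl
      · rw [Finset.mem_singleton.mp hw]
        exact le_of_lt hσ
    have hr := hxy y hyx
    rw [AtLeastRatio] at hr
    calc α * m ≤ (votesBefore V x y : ℝ) := hr
      _ ≤ (c ({u, v} : Finset C) : ℝ) := by exact_mod_cast hmono
  have claim4 : ∀ S ∈ D, S.card = 3 → (2 * α - 1) * m ≤ (c S : ℝ) := by
    intro S hS hcard
    obtain ⟨hxS, _, _, _, _⟩ := hDmem S hS
    have herase : (S.erase x).card = 2 := by
      rw [Finset.card_erase_of_mem hxS, hcard]
    obtain ⟨y, z, hyz, hEq⟩ := Finset.card_eq_two.mp herase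
    have hyS : y ∈ S ∧ y ≠ x := by
      have : y ∈ S.erase x := by rw [hEq]; exact Finset.mem_insert_self y {z}
      exact ⟨Finset.mem_of_mem_erase this, Finset.ne_of_mem_erase this⟩
    have hzS : z ∈ S ∧ z ≠ x := by
      have : z ∈ S.erase x := by rw [hEq]; simp
      exact ⟨Finset.mem_of_mem_erase this, Finset.ne_of_mem_erase this⟩
    have hmono : Multiset.card (V.filter (fun σ => Before σ x y ∧ Before σ x z)) ≤ c S := by
      rw [hcdef]
      apply Multiset.card_le_card
      apply Multiset.monotone_filter_right
      intro σ hσ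
      apply topS_eq_of σ hxS
      intro w hw
      rcases eq_or_ne w x with rfl | hwx
      · exact le_rfl
      · have : w ∈ S.erase x := Finset.mem_erase.mpr ⟨hwx, hw⟩
        rw [hEq] at this
        rcases Finset.mem_insert.mp this with rfl | hw2
        · exact le_of_lt hσ.1
        · rw [Finset.mem_singleton.mp hw2]
          exact le_of_lt hσ.2
    have h1 := hxy y hyS.2
    have h2 := hxy z hzS.2
    rw [AtLeastRatio] at h1 h2
    have hie := card_filter_and_le V (fun σ => Before σ x y) (fun σ => Before σ x z)
    rw [votesBefore] at h1 h2
    have hieR : (Multiset.card (V.filter (fun σ => Before σ x y)) : ℝ) +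
        (Multiset.card (V.filter (fun σ => Before σ x z)) : ℝ) ≤
        (Multiset.card (V.filter (fun σ => Before σ x y ∧ Before σ x z)) : ℝ) + m := by
      exact_mod_cast hie
    have hmonoR : (Multiset.card (V.filter (fun σ => Before σ x y ∧ Before σ x z)) : ℝ)
        ≤ (c S : ℝ) := by exact_mod_cast hmono
    linarith
  -- counting sets
  set B : Finset C := Finset.univ.filter (fun y => Before π y x) with hBdef
  set P : Finset (Finset C) := D.filter (fun S => S.card = 2) with hPdef
  set T : Finset (Finset C) := D.filter (fun S => S.card = 3) with hTdef
  have hyB : y₀ ∈ B := by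
    rw [hBdef, Finset.mem_filter]
    exact ⟨Finset.mem_univ _, hy₀B⟩
  have hBne : ∀ y ∈ B, y ≠ x := by
    intro y hy
    rw [hBdef, Finset.mem_filter] at hy
    intro rfl_
    subst rfl_
    exact lt_irrefl _ hy.2
  have hpairD : ∀ y ∈ B, ({x, y} : Finset C) ∈ P := by
    intro y hy
    have hyx : y ≠ x := hBne y hy
    rw [hBdef, Finset.mem_filter] at hy
    have hcard : ({x, y} : Finset C).card = 2 := by
      rw [Finset.card_insert_of_notMem (by simp [Ne.symm hyx]), Finset.card_singleton]
    have htopπ : topS π ({x, y} : Finset C) = (y : WithTop C) := by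
      apply topS_eq_of π (by simp)
      intro w hw
      rcases Finset.mem_insert.mp hw with rfl | hw
      · exact le_of_lt hy.2
      · rw [Finset.mem_singleton.mp hw]
    have htopπ' : topS π' ({x, y} : Finset C) = (x : WithTop C) :=
      topS_moveTop_mem π (Finset.mem_insert_self x {y})
    rw [hPdef, Finset.mem_filter, hDdef, Finset.mem_filter, hDomdef, Finset.mem_filter]
    refine ⟨⟨⟨Finset.mem_powerset.mpr (Finset.subset_univ _), by omega⟩, ?_⟩, hcard⟩
    rw [htopπ, htopπ']
    simp [hyx]
  have hPB : B.card ≤ P.card := by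
    have himg : B.image (fun y => ({x, y} : Finset C)) ⊆ P := by
      intro S hS
      obtain ⟨y, hy, rfl⟩ := Finset.mem_image.mp hS
      exact hpairD y hy
    have hinj : Set.InjOn (fun y => ({x, y} : Finset C)) B := by
      intro a ha b hb h
      have h' : ({x, a} : Finset C) = ({x, b} : Finset C) := h
      have hax : a ≠ x := hBne a ha
      have : a ∈ ({x, b} : Finset C) := by
        rw [← h']; simp
      rcases Finset.mem_insert.mp this with rfl | h2
      · exact absurd rfl hax
      · exact Finset.mem_singleton.mp h2
    calc B.card = (B.image (fun y => ({x, y} : Finset C))).card :=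
          (Finset.card_image_of_injOn hinj).symm
      _ ≤ P.card := Finset.card_le_card himg
  have hTB : T.card ≤ B.card * (n - 2) := by
    have hsub : T ⊆ B.biUnion (fun y =>
        ((Finset.univ.erase x).erase y).image (fun z => ({x, y, z} : Finset C))) := by
      intro S hS
      rw [hTdef, Finset.mem_filter] at hS
      obtain ⟨hSD, hcard⟩ := hS
      obtain ⟨hxS, _, _, _, htopne⟩ := hDmem S hSD
      have hSne : S.Nonempty := Finset.card_pos.mp (by omega)
      obtain ⟨a, haS, hatop, hamin⟩ := topS_spec π hSne
      have hax : a ≠ x := by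
        intro rfl_
        subst rfl_
        exact htopne hatop
      have haB : a ∈ B := by
        rw [hBdef, Finset.mem_filter]
        refine ⟨Finset.mem_univ _, ?_⟩
        have : π a ≠ π x := fun hc => hax (π.injective hc)
        exact lt_of_le_of_ne (hamin x hxS) this
      have hc1 : ((S.erase x).erase a).card = 1 := by
        rw [Finset.card_erase_of_mem (Finset.mem_erase.mpr ⟨hax, haS⟩),
          Finset.card_erase_of_mem hxS, hcard]
      obtain ⟨z, hz⟩ := Finset.card_eq_one.mp hc1
      have hzmem : z ∈ (S.erase x).erase a := by rw [hz]; simp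
      have hza : z ≠ a := (Finset.mem_erase.mp hzmem).1
      have hzx : z ≠ x := (Finset.mem_erase.mp (Finset.mem_of_mem_erase hzmem)).1
      have hzS : z ∈ S := Finset.mem_of_mem_erase (Finset.mem_of_mem_erase hzmem)
      have hSeq : S = ({x, a, z} : Finset C) := by
        apply Finset.eq_of_subset_of_card_le
        · intro w hw
          rcases eq_or_ne w x with rfl | hwx
          · simp
          rcases eq_or_ne w a with rfl | hwa
          · simp
          have : w ∈ (S.erase x).erase a :=
            Finset.mem_erase.mpr ⟨hwa, Finset.mem_erase.mpr ⟨hwx, hw⟩⟩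
          rw [hz] at this
          rw [Finset.mem_singleton.mp this]
          simp
        · have : ({x, a, z} : Finset C).card ≤ 3 := by
            apply le_trans (Finset.card_insert_le _ _)
            apply Nat.succ_le_succ
            apply le_trans (Finset.card_insert_le _ _)
            simp
          omega
      rw [Finset.mem_biUnion]
      refine ⟨a, haB, ?_⟩
      rw [Finset.mem_image]
      exact ⟨z, Finset.mem_erase.mpr ⟨hza, Finset.mem_erase.mpr ⟨hzx, Finset.mem_univ _⟩⟩,
        hSeq.symm⟩
    apply le_trans (Finset.card_le_card hsub)
    apply Finset.card_biUnion_le_card_mul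
    intro y hy
    apply le_trans (Finset.card_image_le)
    have hymem : y ∈ Finset.univ.erase x := Finset.mem_erase.mpr ⟨hBne y hy, Finset.mem_univ _⟩
    rw [Finset.card_erase_of_mem hymem, Finset.card_erase_of_mem (Finset.mem_univ x),
      Finset.card_univ]
    omega
  -- splitting sums over D
  have hDsplit : ∀ f : Finset C → ℕ, ∑ S ∈ D, f S = ∑ S ∈ P, f S + ∑ S ∈ T, f S := by
    intro f
    rw [hPdef]
    rw [← Finset.sum_filter_add_sum_filter_not D (fun S => S.card = 2) f]
    congr 1
    apply Finset.sum_congr _ (fun _ _ => rfl)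
    rw [hTdef]
    apply Finset.filter_congr
    intro S hS
    obtain ⟨_, h2, h3, _, _⟩ := hDmem S hS
    constructor
    · intro h; omega
    · intro h; omega
  have hDcard : D.card = P.card + T.card := by
    have := hDsplit (fun _ => 1)
    simpa using this
  -- the core counting inequality : D.card * m < 2 * ∑ c
  have hcount : (D.card : ℝ) * m < 2 * ((∑ S ∈ D, c S : ℕ) : ℝ) := by
    have hsum : ((∑ S ∈ D, c S : ℕ) : ℝ) ≥
        (P.card : ℝ) * (α * m) + (T.card : ℝ) * ((2 * α - 1) * m) := by
      rw [hDsplit c]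
      push_cast
      have hP : (P.card : ℝ) * (α * m) ≤ ∑ S ∈ P, (c S : ℝ) := by
        have := Finset.card_nsmul_le_sum P (fun S => (c S : ℝ)) (α * m) ?_
        · rwa [nsmul_eq_mul] at this
        · intro S hS
          rw [hPdef, Finset.mem_filter] at hS
          exact claim3 S hS.1 hS.2
      have hT : (T.card : ℝ) * ((2 * α - 1) * m) ≤ ∑ S ∈ T, (c S : ℝ) := by
        have := Finset.card_nsmul_le_sum T (fun S => (c S : ℝ)) ((2 * α - 1) * m) ?_
        · rwa [nsmul_eq_mul] at this
        · intro S hS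
          rw [hTdef, Finset.mem_filter] at hS
          exact claim4 S hS.1 hS.2
      push_cast at hP hT
      linarith
    have hden : (0:ℝ) < 4 * (n : ℝ) - 6 := by
      have : (2:ℝ) ≤ (n : ℝ) := by exact_mod_cast hn
      linarith
    have hA : 3 * (n : ℝ) - 5 < α * (4 * (n : ℝ) - 6) := by
      rw [div_lt_iff₀ hden] at hα
      exact hα
    have hp1 : (1:ℝ) ≤ (P.card : ℝ) := by
      have : 1 ≤ P.card := le_trans (by
        have : 0 < B.card := Finset.card_pos.mpr ⟨y₀, hyB⟩
        omega) hPB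
      exact_mod_cast this
    have ht0 : (0:ℝ) ≤ (T.card : ℝ) := by positivity
    have htp : (T.card : ℝ) ≤ (P.card : ℝ) * ((n : ℝ) - 2) := by
      have h1 : T.card ≤ P.card * (n - 2) := le_trans hTB (Nat.mul_le_mul_right _ hPB)
      have h2 : ((P.card * (n - 2) : ℕ) : ℝ) = (P.card : ℝ) * ((n:ℝ) - 2) := by
        push_cast [Nat.cast_sub hn]
        ring
      calc (T.card : ℝ) ≤ ((P.card * (n - 2) : ℕ) : ℝ) := by exact_mod_cast h1
        _ = _ := h2
    have hm1R : (1:ℝ) ≤ (m : ℝ) := by exact_mod_cast hm1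
    have hcore : 0 < (2 * α - 1) * (P.card : ℝ) + (4 * α - 3) * (T.card : ℝ) := by
      rcases le_or_gt 3 (4 * α) with h | h
      · have h1 : (0:ℝ) ≤ (4 * α - 3) * (T.card : ℝ) :=
          mul_nonneg (by linarith) ht0
        have h2 : (2 * α - 1) * 1 ≤ (2 * α - 1) * (P.card : ℝ) :=
          mul_le_mul_of_nonneg_left hp1 (by linarith)
        nlinarith
      · have h1 : (3 - 4 * α) * (T.card : ℝ) ≤ (3 - 4 * α) * ((P.card : ℝ) * ((n:ℝ) - 2)) :=
          mul_le_mul_of_nonneg_left htp (by linarith)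
        have h2 : 0 < (P.card : ℝ) * (α * (4 * (n : ℝ) - 6) - (3 * (n : ℝ) - 5)) :=
          mul_pos (by linarith) (by linarith)
        nlinarith
    have hfinal : ((P.card : ℝ) + (T.card : ℝ)) * m <
        2 * ((P.card : ℝ) * (α * m) + (T.card : ℝ) * ((2 * α - 1) * m)) := by
      have hmul : ((2 * α - 1) * (P.card : ℝ) + (4 * α - 3) * (T.card : ℝ)) * 1 ≤
          ((2 * α - 1) * (P.card : ℝ) + (4 * α - 3) * (T.card : ℝ)) * m :=
        mul_le_mul_of_nonneg_left hm1R hcore.le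
      nlinarith
    have hDP : (D.card : ℝ) = (P.card : ℝ) + (T.card : ℝ) := by
      rw [hDcard]; push_cast; ring
    rw [hDP]
    linarith
  -- assembling the contradiction
  have hA_def : kDistV 3 π V =
      ∑ S ∈ D, Multiset.card (V.filter (fun σ => topS π S ≠ topS σ S)) +
      ∑ S ∈ Dom.filter (fun S => ¬ topS π S ≠ topS π' S),
        Multiset.card (V.filter (fun σ => topS π S ≠ topS σ S)) := by
    rw [hkdV π, hDdef, Finset.sum_filter_add_sum_filter_not]
  have hA'_def : kDistV 3 π' V =
      ∑ S ∈ D, Multiset.card (V.filter (fun σ => topS π' S ≠ topS σ S)) +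
      ∑ S ∈ Dom.filter (fun S => ¬ topS π S ≠ topS π' S),
        Multiset.card (V.filter (fun σ => topS π' S ≠ topS σ S)) := by
    rw [hkdV π', hDdef, Finset.sum_filter_add_sum_filter_not]
  have hrest : ∑ S ∈ Dom.filter (fun S => ¬ topS π S ≠ topS π' S),
        Multiset.card (V.filter (fun σ => topS π S ≠ topS σ S)) =
      ∑ S ∈ Dom.filter (fun S => ¬ topS π S ≠ topS π' S),
        Multiset.card (V.filter (fun σ => topS π' S ≠ topS σ S)) := by
    apply Finset.sum_congr rfl
    intro S hS
    rw [Finset.mem_filter] at hS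
    have heq : topS π S = topS π' S := not_not.mp hS.2
    rw [heq]
  set SA := ∑ S ∈ D, Multiset.card (V.filter (fun σ => topS π S ≠ topS σ S)) with hSA
  set SA' := ∑ S ∈ D, Multiset.card (V.filter (fun σ => topS π' S ≠ topS σ S)) with hSA'
  set Sc := ∑ S ∈ D, c S with hSc
  have hAA' : SA ≤ SA' := by
    have := hle
    rw [hA_def, hA'_def, hrest] at this
    omega
  have hsum1 : SA' + Sc = D.card * m := by
    rw [hSA', hSc, ← Finset.sum_add_distrib]
    rw [Finset.sum_congr rfl claim1]
    rw [Finset.sum_const, smul_eq_mul]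
  have hsum2 : Sc ≤ SA := by
    rw [hSc, hSA]
    exact Finset.sum_le_sum claim2
  have hnat : 2 * Sc ≤ D.card * m := by omega
  have : (2 * Sc : ℝ) ≤ (D.card : ℝ) * m := by exact_mod_cast hnat
  rw [hSc] at this
  linarith [hcount]



/-- if `x ≥_α y` for every `y ≠ x` with `α > (3n-5)/(4n-6)`, then `x` is
ranked first in every 3-wise median; in particular this holds when `x ≥_{3/4} y` for
every `y ≠ x`. -/
theorem stmt4 {C : Type*} [Fintype C] [DecidableEq C]
    (hn : 2 ≤ Fintype.card C)
    (V : Multiset (Ranking C)) (hV : V ≠ 0) (x : C) :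
    (∀ α : ℝ,
      (3 * (Fintype.card C : ℝ) - 5) / (4 * (Fintype.card C : ℝ) - 6) < α →
      (∀ y : C, y ≠ x → AtLeastRatio V α x y) →
      ∀ π : Ranking C, IsKMedian 3 V π → RankedFirst π x) ∧
    ((∀ y : C, y ≠ x → AtLeastRatio V (3 / 4) x y) →
      ∀ π : Ranking C, IsKMedian 3 V π → RankedFirst π x) := by
  constructor
  · intro α hα hxy π hmed
    exact keyLemma hn V hV x α hα hxy π hmed
  · intro hxy π hmed
    apply keyLemma hn V hV x (3/4) ?_ hxy π hmed
    have hc : (2:ℝ) ≤ (Fintype.card C : ℝ) := by exact_mod_cast hn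
    rw [div_lt_iff₀ (by linarith)]
    linarith
end
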